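/- Let A and B be graphs such that the Cartesian product A□B is generalized t-nicely edge distance-balanced. Then, for every edge a₁a₂ of A and every edge b₁b₂ of B, m_{a₁}(a₁a₂)·|V(B)| + n_{a₁}(a₁a₂)·|E(B)| = m_{b₁}(b₁b₂)·|V(A)| + n_{b₁}(b₁b₂)·|E(A)| (both equal the common value t·γ'_{A□B} after consistent labeling), i.e., the weighted counts from A-edges and B-edges coincide. -/

import Mathlib

open SimpleGraph Finset

/-- Distance from a vertex to an edge: the minimum distance to its endpoints. -/
noncomputable def edgeDist {V : Type*} (G : SimpleGraph V) (v : V) (e : Sym2 V) : ℕ :=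
  Sym2.lift ⟨fun x y => min (G.dist v x) (G.dist v y), fun _ _ => min_comm _ _⟩ e

/-- Number of edges strictly closer to `α` than to `β`. -/
noncomputable def mCount {V : Type*} (G : SimpleGraph V) (α β : V) : ℕ :=
  {e ∈ G.edgeSet | edgeDist G α e < edgeDist G β e}.ncard

/-- Number of vertices strictly closer to `α` than to `β`. -/
noncomputable def nCount {V : Type*} (G : SimpleGraph V) (α β : V) : ℕ :=
  {w : V | G.dist w α < G.dist w β}.ncard

/-- Number of edges other than `αβ` itself equidistant from `α` and `β`. -/
noncomputable def m0Count {V : Type*} (G : SimpleGraph V) (α β : V) : ℕ :=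
  {e ∈ G.edgeSet | e ≠ s(α, β) ∧ edgeDist G α e = edgeDist G β e}.ncard

/-- The distance-partition class `D'^i_j(αβ)`: edges at distance `i` from `α`
and `j` from `β`. -/
def Dset {V : Type*} (G : SimpleGraph V) (α β : V) (i j : ℕ) : Set (Sym2 V) :=
  {e ∈ G.edgeSet | edgeDist G α e = i ∧ edgeDist G β e = j}

/-- Generalized t-edge distance-balanced graph. -/
def GtEDB {V : Type*} (G : SimpleGraph V) (t : ℕ) : Prop :=
  ∀ α β : V, G.Adj α β →
    mCount G α β = t * mCount G β α ∨ mCount G β α = t * mCount G α β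

/-- The lexicographic product of two simple graphs. -/
def lexProd {V W : Type*} (A : SimpleGraph V) (B : SimpleGraph W) :
    SimpleGraph (V × W) where
  Adj p q := A.Adj p.1 q.1 ∨ (p.1 = q.1 ∧ B.Adj p.2 q.2)
  symm := by
    constructor
    rintro p q (h | ⟨h1, h2⟩)
    · exact Or.inl h.symm
    · exact Or.inr ⟨h1.symm, h2.symm⟩
  loopless := by
    constructor
    rintro p (h | ⟨_, h⟩)
    · exact A.irrefl h
    · exact B.irrefl h
section Aux

variable {V W : Type*} {A : SimpleGraph V} {B : SimpleGraph W}

lemma aux_walk_le (hA : A.Connected) (hB : B.Connected) :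
    ∀ {x y : V × W} (w : (A.boxProd B).Walk x y),
      A.dist x.1 y.1 + B.dist x.2 y.2 ≤ w.length := by
  intro x y w
  induction w with
  | nil => simp
  | @cons x u y h p ih =>
    rcases id h with ⟨hadj, heq⟩ | ⟨hadj, heq⟩
    · have h1 : A.dist x.1 y.1 ≤ A.dist x.1 u.1 + A.dist u.1 y.1 :=
        hA.dist_triangle
      have h2 : A.dist x.1 u.1 = 1 := SimpleGraph.dist_eq_one_iff_adj.mpr hadj
      have h3 : B.dist x.2 y.2 = B.dist u.2 y.2 := by rw [heq]
      simp only [SimpleGraph.Walk.length_cons]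
      omega
    · have h1 : B.dist x.2 y.2 ≤ B.dist x.2 u.2 + B.dist u.2 y.2 :=
        hB.dist_triangle
      have h2 : B.dist x.2 u.2 = 1 := SimpleGraph.dist_eq_one_iff_adj.mpr hadj
      have h3 : A.dist x.1 y.1 = A.dist u.1 y.1 := by rw [heq]
      simp only [SimpleGraph.Walk.length_cons]
      omega

lemma aux_dist_boxProd (hA : A.Connected) (hB : B.Connected) (x y : V × W) :
    (A.boxProd B).dist x y = A.dist x.1 y.1 + B.dist x.2 y.2 := by
  obtain ⟨x1, x2⟩ := x
  obtain ⟨y1, y2⟩ := y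
  refine le_antisymm ?_ ?_
  · obtain ⟨p, hp⟩ := hA.exists_walk_length_eq_dist x1 y1
    obtain ⟨q, hq⟩ := hB.exists_walk_length_eq_dist x2 y2
    calc (A.boxProd B).dist (x1, x2) (y1, y2)
        ≤ ((p.boxProdLeft B x2).append (q.boxProdRight A y1)).length :=
          SimpleGraph.dist_le _
      _ = p.length + q.length := by
          rw [SimpleGraph.Walk.length_append]
          exact congrArg₂ (· + ·) (p.length_map _) (q.length_map _)
      _ = _ := by rw [hp, hq]
  · obtain ⟨w, hw⟩ := (hA.boxProd hB).exists_walk_length_eq_dist (x1, x2) (y1, y2)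
    have := aux_walk_le hA hB w
    rw [hw] at this
    exact this

lemma aux_edgeDist_mk (G : SimpleGraph V) (v x y : V) :
    edgeDist G v s(x, y) = min (G.dist v x) (G.dist v y) := rfl

lemma aux_ncard_prod {α β : Type*} (s : Set α) (t : Set β) :
    (s ×ˢ t).ncard = s.ncard * t.ncard := by
  rw [← Nat.card_coe_set_eq, ← Nat.card_coe_set_eq, ← Nat.card_coe_set_eq,
    ← Nat.card_prod]
  exact Nat.card_congr (Equiv.Set.prod s t)

/-- The key counting identity for a horizontal (A-direction) edge of the box product. -/
lemma aux_key_left [Fintype V] [Fintype W] (hA : A.Connected) (hB : B.Connected)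
    (a₁ a₂ : V) (b : W) :
    mCount (A.boxProd B) (a₁, b) (a₂, b)
      = mCount A a₁ a₂ * Fintype.card W + nCount A a₁ a₂ * B.edgeSet.ncard := by
  classical
  have hd := aux_dist_boxProd hA hB
  set MA : Set (Sym2 V) := {e ∈ A.edgeSet | edgeDist A a₁ e < edgeDist A a₂ e} with hMA
  set NA : Set V := {u | A.dist u a₁ < A.dist u a₂} with hNA
  set f : Sym2 V × W → Sym2 (V × W) :=
    fun p => Sym2.map (fun u => (u, p.2)) p.1 with hf
  set g : V × Sym2 W → Sym2 (V × W) :=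
    fun p => Sym2.map (fun w => (p.1, w)) p.2 with hg
  have hHoriz : ∀ (x y : V) (wb : W),
      (edgeDist (A.boxProd B) (a₁, b) s((x, wb), (y, wb))
          < edgeDist (A.boxProd B) (a₂, b) s((x, wb), (y, wb))
        ↔ edgeDist A a₁ s(x, y) < edgeDist A a₂ s(x, y)) := by
    intro x y wb
    rw [aux_edgeDist_mk, aux_edgeDist_mk, aux_edgeDist_mk, aux_edgeDist_mk,
      hd, hd, hd, hd]
    simp only
    omega
  have hVert : ∀ (u : V) (w1 w2 : W),
      (edgeDist (A.boxProd B) (a₁, b) s((u, w1), (u, w2))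
          < edgeDist (A.boxProd B) (a₂, b) s((u, w1), (u, w2))
        ↔ A.dist u a₁ < A.dist u a₂) := by
    intro u w1 w2
    rw [aux_edgeDist_mk, aux_edgeDist_mk, hd, hd, hd, hd]
    simp only
    have e1 : A.dist u a₁ = A.dist a₁ u := SimpleGraph.dist_comm
    have e2 : A.dist u a₂ = A.dist a₂ u := SimpleGraph.dist_comm
    omega
  have hset : {e ∈ (A.boxProd B).edgeSet |
        edgeDist (A.boxProd B) (a₁, b) e < edgeDist (A.boxProd B) (a₂, b) e}
      = f '' (MA ×ˢ (Set.univ : Set W)) ∪ g '' (NA ×ˢ B.edgeSet) := by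
    ext e
    induction e using Sym2.ind with
    | _ p q =>
      obtain ⟨u, w⟩ := p
      obtain ⟨u', w'⟩ := q
      constructor
      · rintro ⟨hadj, hlt⟩
        rw [SimpleGraph.mem_edgeSet] at hadj
        rcases hadj with ⟨hA', he⟩ | ⟨hB', he⟩
        · obtain rfl : w = w' := he
          left
          refine ⟨(s(u, u'), w), ⟨⟨hA', ?_⟩, Set.mem_univ _⟩, by simp [hf]⟩
          exact (hHoriz u u' w).mp hlt
        · obtain rfl : u = u' := he
          right
          refine ⟨(u, s(w, w')), ⟨?_, hB'⟩, by simp [hg]⟩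
          exact (hVert u w w').mp hlt
      · rintro (⟨⟨eA, wb⟩, ⟨heA, -⟩, heq⟩ | ⟨⟨ub, eB⟩, ⟨hu, heB⟩, heq⟩)
        · induction eA using Sym2.ind with
          | _ x y =>
            obtain ⟨hxy, hlt⟩ := heA
            rw [SimpleGraph.mem_edgeSet] at hxy
            simp only [hf, Sym2.map_pair_eq] at heq
            rw [← heq]
            refine ⟨(SimpleGraph.mem_edgeSet _).mpr (Or.inl ⟨hxy, rfl⟩), ?_⟩
            exact (hHoriz x y wb).mpr hlt
        · induction eB using Sym2.ind with
          | _ w1 w2 =>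
            rw [SimpleGraph.mem_edgeSet] at heB
            simp only [hg, Sym2.map_pair_eq] at heq
            rw [← heq]
            refine ⟨(SimpleGraph.mem_edgeSet _).mpr (Or.inr ⟨heB, rfl⟩), ?_⟩
            exact (hVert ub w1 w2).mpr hu
  have hdisj : Disjoint (f '' (MA ×ˢ (Set.univ : Set W))) (g '' (NA ×ˢ B.edgeSet)) := by
    rw [Set.disjoint_left]
    rintro e ⟨⟨eA, wb⟩, ⟨heA, -⟩, rfl⟩ ⟨⟨ub, eB⟩, ⟨-, heB⟩, heq⟩
    induction eA using Sym2.ind with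
    | _ x y =>
      induction eB using Sym2.ind with
      | _ w1 w2 =>
        have hxy : x ≠ y := ((SimpleGraph.mem_edgeSet _).mp heA.1).ne
        have hw : w1 ≠ w2 := ((SimpleGraph.mem_edgeSet _).mp heB).ne
        simp only [hf, hg, Sym2.map_pair_eq, Sym2.eq_iff, Prod.mk.injEq] at heq
        rcases heq with ⟨⟨h1, -⟩, ⟨h2, -⟩⟩ | ⟨⟨h1, -⟩, ⟨h2, -⟩⟩
        · exact hxy (h1.symm.trans h2)
        · exact hxy (h2.symm.trans h1)
  have hfin1 : (f '' (MA ×ˢ (Set.univ : Set W))).Finite := Set.toFinite _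
  have hfin2 : (g '' (NA ×ˢ B.edgeSet)).Finite := Set.toFinite _
  have hinjf : Set.InjOn f (MA ×ˢ (Set.univ : Set W)) := by
    rintro ⟨e1, w1⟩ - ⟨e2, w2⟩ - heq
    induction e1 using Sym2.ind with
    | _ x1 y1 =>
      induction e2 using Sym2.ind with
      | _ x2 y2 =>
        simp only [hf, Sym2.map_pair_eq, Sym2.eq_iff, Prod.mk.injEq] at heq
        simp only [Prod.mk.injEq, Sym2.eq_iff]
        tauto
  have hinjg : Set.InjOn g (NA ×ˢ B.edgeSet) := by
    rintro ⟨u1, e1⟩ - ⟨u2, e2⟩ - heq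
    induction e1 using Sym2.ind with
    | _ x1 y1 =>
      induction e2 using Sym2.ind with
      | _ x2 y2 =>
        simp only [hg, Sym2.map_pair_eq, Sym2.eq_iff, Prod.mk.injEq] at heq
        simp only [Prod.mk.injEq, Sym2.eq_iff]
        tauto
  rw [mCount, hset, Set.ncard_union_eq hdisj hfin1 hfin2,
    Set.ncard_image_of_injOn hinjf, Set.ncard_image_of_injOn hinjg,
    aux_ncard_prod, aux_ncard_prod, Set.ncard_univ, Nat.card_eq_fintype_card]
  rfl

/-- Transfer across the commutativity isomorphism of the box product. -/
lemma aux_mCount_swap [Fintype V] [Fintype W] (hA : A.Connected) (hB : B.Connected)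
    (p q : V × W) :
    mCount (A.boxProd B) p q = mCount (B.boxProd A) p.swap q.swap := by
  classical
  have hd := aux_dist_boxProd hA hB
  have hd' := aux_dist_boxProd hB hA
  have hdist : ∀ (x : V × W) (z : W × V),
      (A.boxProd B).dist x (z.2, z.1) = (B.boxProd A).dist x.swap z := by
    intro x z
    rw [hd, hd']
    simp [Prod.swap]
    omega
  have hmap : ∀ (x : V × W) (e : Sym2 (W × V)),
      edgeDist (A.boxProd B) x (Sym2.map Prod.swap e) = edgeDist (B.boxProd A) x.swap e := by
    intro x e
    induction e using Sym2.ind with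
    | _ z1 z2 =>
      rw [Sym2.map_pair_eq, aux_edgeDist_mk, aux_edgeDist_mk]
      rw [show (Prod.swap z1 : V × W) = (z1.2, z1.1) from rfl,
        show (Prod.swap z2 : V × W) = (z2.2, z2.1) from rfl, hdist, hdist]
  have hsets : {e ∈ (A.boxProd B).edgeSet |
        edgeDist (A.boxProd B) p e < edgeDist (A.boxProd B) q e}
      = Sym2.map Prod.swap '' {e ∈ (B.boxProd A).edgeSet |
        edgeDist (B.boxProd A) p.swap e < edgeDist (B.boxProd A) q.swap e} := by
    ext e
    induction e using Sym2.ind with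
    | _ x y =>
      constructor
      · rintro ⟨hadj, hlt⟩
        refine ⟨s(x.swap, y.swap), ⟨?_, ?_⟩, by simp [Sym2.map_pair_eq]⟩
        · rw [SimpleGraph.mem_edgeSet] at hadj ⊢
          rcases hadj with ⟨h1, h2⟩ | ⟨h1, h2⟩
          · exact Or.inr ⟨h1, h2⟩
          · exact Or.inl ⟨h1, h2⟩
        · rw [← hmap p, ← hmap q]
          simpa [Sym2.map_pair_eq] using hlt
      · rintro ⟨e', ⟨hadj, hlt⟩, heq⟩
        induction e' using Sym2.ind with
        | _ z1 z2 =>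
          rw [Sym2.map_pair_eq] at heq
          rw [← heq]
          constructor
          · rw [SimpleGraph.mem_edgeSet] at hadj ⊢
            rcases hadj with ⟨h1, h2⟩ | ⟨h1, h2⟩
            · exact Or.inr ⟨h1, h2⟩
            · exact Or.inl ⟨h1, h2⟩
          · rw [show s(Prod.swap z1, Prod.swap z2)
                = Sym2.map Prod.swap s(z1, z2) from (Sym2.map_pair_eq _ _ _).symm,
              hmap p, hmap q]
            exact hlt
  rw [mCount, mCount, hsets,
    Set.ncard_image_of_injOn ((Sym2.map.injective Prod.swap_injective).injOn)]

/-- The key counting identity for a vertical (B-direction) edge of the box product. -/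
lemma aux_key_right [Fintype V] [Fintype W] (hA : A.Connected) (hB : B.Connected)
    (b₁ b₂ : W) (a : V) :
    mCount (A.boxProd B) (a, b₁) (a, b₂)
      = mCount B b₁ b₂ * Fintype.card V + nCount B b₁ b₂ * A.edgeSet.ncard := by
  rw [aux_mCount_swap hA hB]
  exact aux_key_left hB hA b₁ b₂ a

end Aux

/-- if `A □ B` is Gt-NEDB with constant `γ'`, then (after
consistent labeling) the weighted counts from `A`-edges and `B`-edges coincide,
both being equal to `t·γ'`. -/
theorem stmt19 {V W : Type*} [Fintype V] [Fintype W]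
    (A : SimpleGraph V) (B : SimpleGraph W) (t γ : ℕ)
    (hA : A.Connected) (hB : B.Connected)
    (hNEDB : ∀ p q : V × W, (A.boxProd B).Adj p q →
      (mCount (A.boxProd B) p q = t * γ ∧ mCount (A.boxProd B) q p = γ) ∨
      (mCount (A.boxProd B) q p = t * γ ∧ mCount (A.boxProd B) p q = γ)) :
    ∀ a₁ a₂ : V, A.Adj a₁ a₂ → ∀ b₁ b₂ : W, B.Adj b₁ b₂ →
      ∃ (a a' : V) (b b' : W),
        s(a, a') = s(a₁, a₂) ∧ s(b, b') = s(b₁, b₂) ∧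
        mCount A a a' * Fintype.card W + nCount A a a' * B.edgeSet.ncard = t * γ ∧
        mCount B b b' * Fintype.card V + nCount B b b' * A.edgeSet.ncard = t * γ := by
  intro a₁ a₂ ha b₁ b₂ hb
  have hAe : (A.boxProd B).Adj (a₁, b₁) (a₂, b₁) := Or.inl ⟨ha, rfl⟩
  have hBe : (A.boxProd B).Adj (a₁, b₁) (a₁, b₂) := Or.inr ⟨hb, rfl⟩
  have k1 := aux_key_left hA hB a₁ a₂ b₁
  have k2 := aux_key_left hA hB a₂ a₁ b₁
  have k3 := aux_key_right hA hB b₁ b₂ a₁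
  have k4 := aux_key_right hA hB b₂ b₁ a₁
  obtain ⟨a, a', hsa, hka⟩ : ∃ a a', s(a, a') = s(a₁, a₂) ∧
      mCount A a a' * Fintype.card W + nCount A a a' * B.edgeSet.ncard = t * γ := by
    rcases hNEDB _ _ hAe with ⟨h1, -⟩ | ⟨h1, -⟩
    · exact ⟨a₁, a₂, rfl, by rw [← k1]; exact h1⟩
    · exact ⟨a₂, a₁, Sym2.eq_swap, by rw [← k2]; exact h1⟩
  obtain ⟨b, b', hsb, hkb⟩ : ∃ b b', s(b, b') = s(b₁, b₂) ∧
      mCount B b b' * Fintype.card V + nCount B b b' * A.edgeSet.ncard = t * γ := by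
    rcases hNEDB _ _ hBe with ⟨h2, -⟩ | ⟨h2, -⟩
    · exact ⟨b₁, b₂, rfl, by rw [← k3]; exact h2⟩
    · exact ⟨b₂, b₁, Sym2.eq_swap, by rw [← k4]; exact h2⟩
  exact ⟨a, a', b, b', hsa, hsb, hka, hkb⟩
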